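/- Let r ≥ 1, e ≥ 1 be integers and let n be any integer (playing the role of n_{f,p}). Define P_1(X,Y) = (1 - X^{2r+1}Y^{2r-1})(1 + X^{2r}Y^{2r+1})(1 - X^{(2r+1)e-1}Y^{(2r-1)e}) and P_2(X,Y) = X^{2r}Y^{2r-1}(1 - Y^2)(1 - X^{(2r+1)e}Y^{(2r-1)e}), and let A(X,Y) = (P_1 + n P_2)/((1 - X^{2r+1}Y^{2r-1})(1 - X^{2r+1}Y^{2r+1})(1 - X^{(2r+1)e-1}Y^{(2r-1)e})). Then A(X^{-1}, Y^{-1}) = -X · A(X,Y) in Q(X,Y). -/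

import Mathlib

lemma funeq_inv_ne (K : Type*) [Field K] (a : K) (ha : a ≠ 0) (h1 : 1 - a ≠ 0) :
    1 - a⁻¹ ≠ 0 := by
  intro h2
  apply h1
  rw [sub_eq_zero] at h2 ⊢
  rw [eq_comm, inv_eq_one] at h2
  exact h2.symm

set_option maxHeartbeats 1000000 in
lemma funeq_aux (K : Type*) [Field K] (p q m : ℕ)
    (n : ℤ) (X Y : K) (hX : X ≠ 0) (hY : Y ≠ 0)
    (hD1 : 1 - X ^ (p + 2) * Y ^ p ≠ 0)
    (hD2 : 1 - X ^ (p + 2) * Y ^ (p + 2) ≠ 0)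
    (hD3 : 1 - X ^ m * Y ^ q ≠ 0) :
    ((1 - X⁻¹ ^ (p + 2) * Y⁻¹ ^ p) * (1 + X⁻¹ ^ (p + 1) * Y⁻¹ ^ (p + 2)) *
          (1 - X⁻¹ ^ m * Y⁻¹ ^ q) +
        (n : K) * (X⁻¹ ^ (p + 1) * Y⁻¹ ^ p * (1 - Y⁻¹ ^ 2) *
          (1 - X⁻¹ ^ (m + 1) * Y⁻¹ ^ q))) /
      ((1 - X⁻¹ ^ (p + 2) * Y⁻¹ ^ p) * (1 - X⁻¹ ^ (p + 2) * Y⁻¹ ^ (p + 2)) *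
        (1 - X⁻¹ ^ m * Y⁻¹ ^ q)) =
    -X * (((1 - X ^ (p + 2) * Y ^ p) * (1 + X ^ (p + 1) * Y ^ (p + 2)) *
          (1 - X ^ m * Y ^ q) +
        (n : K) * (X ^ (p + 1) * Y ^ p * (1 - Y ^ 2) *
          (1 - X ^ (m + 1) * Y ^ q))) /
      ((1 - X ^ (p + 2) * Y ^ p) * (1 - X ^ (p + 2) * Y ^ (p + 2)) *
        (1 - X ^ m * Y ^ q))) := by
  have ha : X ^ p ≠ 0 := pow_ne_zero _ hX
  have hb : Y ^ p ≠ 0 := pow_ne_zero _ hY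
  have hc : X ^ m ≠ 0 := pow_ne_zero _ hX
  have hd : Y ^ q ≠ 0 := pow_ne_zero _ hY
  simp only [pow_add, pow_one] at hD1 hD2 hD3
  simp only [inv_pow, pow_add, pow_one]
  generalize hA : X ^ p = a at ha hD1 hD2 ⊢
  generalize hB : Y ^ p = b at hb hD1 hD2 ⊢
  generalize hC : X ^ m = c at hc hD3 ⊢
  generalize hD : Y ^ q = d at hd hD3 ⊢
  have hX2 : X ^ 2 ≠ 0 := pow_ne_zero _ hX
  have hY2 : Y ^ 2 ≠ 0 := pow_ne_zero _ hY
  have hd1 : 1 - a⁻¹ * (X ^ 2)⁻¹ * b⁻¹ ≠ 0 := by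
    simp only [← mul_inv]
    exact funeq_inv_ne K _ (mul_ne_zero (mul_ne_zero ha hX2) hb) hD1
  have hd2 : 1 - a⁻¹ * (X ^ 2)⁻¹ * (b⁻¹ * (Y ^ 2)⁻¹) ≠ 0 := by
    simp only [← mul_inv]
    exact funeq_inv_ne K _ (mul_ne_zero (mul_ne_zero ha hX2) (mul_ne_zero hb hY2)) hD2
  have hd3 : 1 - c⁻¹ * d⁻¹ ≠ 0 := by
    rw [← mul_inv]
    exact funeq_inv_ne K _ (mul_ne_zero hc hd) hD3
  rw [mul_div_assoc',
    div_eq_div_iff (mul_ne_zero (mul_ne_zero hd1 hd2) hd3)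
      (mul_ne_zero (mul_ne_zero hD1 hD2) hD3)]
  field_simp
  have hQ1 : a * X ^ 2 * b * (a * X * (b * Y ^ 2)) * (c * d) ≠ 0 := by
    apply_rules [mul_ne_zero]
  have hQ2 : a * X * b * Y ^ 2 * (c * X * d) ≠ 0 := by
    apply_rules [mul_ne_zero]
  have hQ3 : a * X ^ 2 * b * (a * X ^ 2 * (b * Y ^ 2)) * (c * d) ≠ 0 := by
    apply_rules [mul_ne_zero]
  ring

theorem funeq_indecomposable_even (K : Type*) [Field K] (r e : ℕ) (hr : 1 ≤ r) (he : 1 ≤ e)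
    (n : ℤ) (X Y : K) (hX : X ≠ 0) (hY : Y ≠ 0)
    (hD1 : 1 - X ^ (2 * r + 1) * Y ^ (2 * r - 1) ≠ 0)
    (hD2 : 1 - X ^ (2 * r + 1) * Y ^ (2 * r + 1) ≠ 0)
    (hD3 : 1 - X ^ ((2 * r + 1) * e - 1) * Y ^ ((2 * r - 1) * e) ≠ 0) :
    ((1 - X⁻¹ ^ (2 * r + 1) * Y⁻¹ ^ (2 * r - 1)) * (1 + X⁻¹ ^ (2 * r) * Y⁻¹ ^ (2 * r + 1)) *
          (1 - X⁻¹ ^ ((2 * r + 1) * e - 1) * Y⁻¹ ^ ((2 * r - 1) * e)) +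
        (n : K) * (X⁻¹ ^ (2 * r) * Y⁻¹ ^ (2 * r - 1) * (1 - Y⁻¹ ^ 2) *
          (1 - X⁻¹ ^ ((2 * r + 1) * e) * Y⁻¹ ^ ((2 * r - 1) * e)))) /
      ((1 - X⁻¹ ^ (2 * r + 1) * Y⁻¹ ^ (2 * r - 1)) * (1 - X⁻¹ ^ (2 * r + 1) * Y⁻¹ ^ (2 * r + 1)) *
        (1 - X⁻¹ ^ ((2 * r + 1) * e - 1) * Y⁻¹ ^ ((2 * r - 1) * e))) =
    -X * (((1 - X ^ (2 * r + 1) * Y ^ (2 * r - 1)) * (1 + X ^ (2 * r) * Y ^ (2 * r + 1)) *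
          (1 - X ^ ((2 * r + 1) * e - 1) * Y ^ ((2 * r - 1) * e)) +
        (n : K) * (X ^ (2 * r) * Y ^ (2 * r - 1) * (1 - Y ^ 2) *
          (1 - X ^ ((2 * r + 1) * e) * Y ^ ((2 * r - 1) * e)))) /
      ((1 - X ^ (2 * r + 1) * Y ^ (2 * r - 1)) * (1 - X ^ (2 * r + 1) * Y ^ (2 * r + 1)) *
        (1 - X ^ ((2 * r + 1) * e - 1) * Y ^ ((2 * r - 1) * e)))) := by
  have e1 : (2 * r - 1) + 2 = 2 * r + 1 := by omega
  have e2 : (2 * r - 1) + 1 = 2 * r := by omega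
  have e3 : ((2 * r + 1) * e - 1) + 1 = (2 * r + 1) * e := by
    have h1 : 1 ≤ (2 * r + 1) * e := Nat.one_le_iff_ne_zero.mpr (by positivity)
    omega
  have key := funeq_aux K (2 * r - 1) ((2 * r - 1) * e) ((2 * r + 1) * e - 1) n X Y hX hY
    (by rw [e1]; exact hD1) (by rw [e1]; exact hD2) hD3
  rw [e1, e2, e3] at key
  exact key
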